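/- Let k and m be positive integers with gcd(k,m) = 1, and write m = r·p for a positive integer r and a prime p with p ≠ 3. Let β be an element of the subfield F_{2^r} of F_{2^m} (i.e. β^{2^r} = β), and suppose the polynomial P(X) = X^{2^k+1} + X + β has no root in F_{2^r}. Then P(X) has no root in F_{2^m}. -/

import Mathlib

lemma my_iter {F : Type*} [Monoid F] {s : ℕ} {t : F} (h : t ^ 2 ^ s = t) :
    ∀ j, t ^ 2 ^ (j * s) = t := by
  intro j
  induction j with
  | zero => simp
  | succ n ih =>
      have h2 : (n + 1) * s = n * s + s := by ring
      rw [h2, pow_add, pow_mul, ih, h]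

lemma my_bezout {k m : ℕ} (hm : 1 < m) (h : Nat.gcd k m = 1) :
    ∃ A B : ℕ, A * k = 1 + B * m := by
  obtain ⟨A, -, hA⟩ := Nat.exists_mul_mod_eq_one_of_coprime h hm
  refine ⟨A, k * A / m, ?_⟩
  have h1 := Nat.div_add_mod (k * A) m
  have h2 : A * k = k * A := Nat.mul_comm _ _
  have h3 : k * A / m * m = m * (k * A / m) := Nat.mul_comm _ _
  omega

lemma my_idem {F : Type*} [Monoid F] {k m : ℕ} (hbez : ∃ A B : ℕ, A * k = 1 + B * m)
    (hcard : ∀ g : F, g ^ 2 ^ m = g) (g : F) (hg : g ^ 2 ^ k = g) : g ^ 2 = g := by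
  obtain ⟨A, B, hAB⟩ := hbez
  have h1 := my_iter hg A
  have h2 := my_iter (hcard g) B
  calc g ^ 2 = (g ^ 2 ^ (B * m)) ^ 2 := by rw [h2]
    _ = g ^ (2 ^ (B * m) * 2) := (pow_mul g _ 2).symm
    _ = g ^ 2 ^ (A * k) := by rw [hAB, add_comm, pow_add, pow_one]
    _ = g := h1

lemma three_roots {F : Type*} [Field F] [Finite F] (h2 : (2 : F) = 0)
    (k : ℕ) (hk : 0 < k)
    (hfrobk : ∀ s t : F, (s + t) ^ 2 ^ k = s ^ 2 ^ k + t ^ 2 ^ k)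
    (hidem : ∀ g : F, g ^ 2 ^ k = g → g = 0 ∨ g = 1)
    (hone : ∀ g : F, g ^ 2 ^ k = 1 → g = 1)
    {β a b : F} (hβ : β ≠ 0) (hab : a ≠ b)
    (ha : a ^ (2 ^ k + 1) + a + β = 0) (hb : b ^ (2 ^ k + 1) + b + β = 0) :
    ∃ c, c ≠ a ∧ c ≠ b ∧ c ^ (2 ^ k + 1) + c + β = 0 ∧
      ∀ d, d ^ (2 ^ k + 1) + d + β = 0 → d = a ∨ d = b ∨ d = c := by
  classical
  have hq0 : (2 : ℕ) ^ k ≠ 0 := pow_ne_zero _ two_ne_zero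
  have hq1 : 1 ≤ 2 ^ k := Nat.one_le_two_pow
  have hq2 : 2 ≤ 2 ^ k := by
    calc 2 = 2 ^ 1 := (pow_one 2).symm
    _ ≤ 2 ^ k := Nat.pow_le_pow_right (by omega) hk
  have hqsub : 2 ^ k - 1 + 1 = 2 ^ k := Nat.succ_pred_eq_of_pos (by positivity)
  -- a ≠ 0
  have ha0 : a ≠ 0 := by
    rintro rfl
    rw [zero_pow (by positivity), zero_add, zero_add] at ha
    exact hβ ha
  -- e ≠ 0
  set e : F := a ^ 2 ^ k + 1 with he
  have heq : e ≠ 0 := by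
    intro h
    have h1 : a ^ 2 ^ k = 1 := by linear_combination h - h2
    have h2' : a = 1 := hone a h1
    apply hβ
    rw [h2', one_pow] at ha
    linear_combination ha - h2
  -- rewrite ha
  have ha' : a ^ 2 ^ k * a + a + β = 0 := by rw [← pow_succ]; exact ha
  -- the key equivalence
  have C : ∀ z : F, z ≠ 0 →
      ((a + z⁻¹) ^ (2 ^ k + 1) + (a + z⁻¹) + β = 0 ↔ e * z ^ 2 ^ k + a * z = 1) := by
    intro z hz
    have hzq : z ^ 2 ^ k ≠ 0 := pow_ne_zero _ hz
    have key : (a + z⁻¹) ^ (2 ^ k + 1) + (a + z⁻¹) + β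
        = (z ^ 2 ^ k * z)⁻¹ * (e * z ^ 2 ^ k + a * z + 1) := by
      rw [pow_succ, hfrobk, inv_pow]
      have hzi : z * z⁻¹ = 1 := mul_inv_cancel₀ hz
      have hzqi : z ^ 2 ^ k * (z ^ 2 ^ k)⁻¹ = 1 := mul_inv_cancel₀ hzq
      linear_combination ha' - e * z⁻¹ * hzqi - a * (z ^ 2 ^ k)⁻¹ * hzi - z⁻¹ * he
    rw [key]
    constructor
    · intro h
      rcases mul_eq_zero.mp h with h | h
      · exact absurd h (inv_ne_zero (mul_ne_zero hzq hz))
      · linear_combination h - h2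
    · intro h
      have : e * z ^ 2 ^ k + a * z + 1 = 0 := by linear_combination h + h2
      rw [this, mul_zero]
  -- injectivity of t ↦ t ^ (2^k - 1)
  have hinj : Function.Injective (fun t : F => t ^ (2 ^ k - 1)) := by
    intro s t hst
    simp only at hst
    by_cases hs : s = 0
    · subst hs
      rw [zero_pow (by omega)] at hst
      exact (pow_eq_zero_iff (by omega)).mp hst.symm |>.symm
    by_cases ht : t = 0
    · subst ht
      rw [zero_pow (by omega)] at hst
      exact (pow_eq_zero_iff (by omega)).mp hst
    have hone' : (s * t⁻¹) ^ (2 ^ k - 1) = 1 := by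
      rw [mul_pow, inv_pow, hst]
      exact mul_inv_cancel₀ (pow_ne_zero _ ht)
    have hg : (s * t⁻¹) ^ 2 ^ k = s * t⁻¹ := by
      have hsp : (s * t⁻¹) ^ 2 ^ k = (s * t⁻¹) ^ (2 ^ k - 1) * (s * t⁻¹) := by
        rw [← pow_succ, hqsub]
      rw [hsp, hone', one_mul]
    rcases hidem _ hg with h | h
    · exact absurd h (mul_ne_zero hs (inv_ne_zero ht))
    · field_simp at h
      exact h
  have hsurj : Function.Surjective (fun t : F => t ^ (2 ^ k - 1)) :=
    Finite.surjective_of_injective hinj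
  obtain ⟨w, hw⟩ := hsurj (a * e⁻¹)
  simp only at hw
  have hw0 : w ≠ 0 := by
    intro h
    rw [h, zero_pow (by omega)] at hw
    rcases mul_eq_zero.mp hw.symm with h' | h'
    · exact ha0 h'
    · exact inv_ne_zero heq h'
  have hwkey : e * w ^ 2 ^ k = a * w := by
    have : w ^ 2 ^ k = w ^ (2 ^ k - 1) * w := by rw [← pow_succ, hqsub]
    rw [this, hw]
    field_simp
  -- z₁ from b
  have hab0 : a + b ≠ 0 := by
    intro h
    apply hab
    linear_combination h - b * h2
  set z₁ : F := (a + b)⁻¹ with hz₁def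
  have hz₁0 : z₁ ≠ 0 := inv_ne_zero hab0
  have hbz : a + z₁⁻¹ = b := by
    rw [hz₁def, inv_inv]
    linear_combination a * h2
  have hLz₁ : e * z₁ ^ 2 ^ k + a * z₁ = 1 := by
    apply (C z₁ hz₁0).mp
    rw [hbz]; exact hb
  -- z₂ and c
  set z₂ : F := z₁ + w with hz₂def
  have hLz₂ : e * z₂ ^ 2 ^ k + a * z₂ = 1 := by
    rw [hz₂def, hfrobk]
    linear_combination hLz₁ + hwkey + (a * w) * h2
  have hz₂0 : z₂ ≠ 0 := by
    intro h
    rw [h, zero_pow hq0, mul_zero, mul_zero, add_zero] at hLz₂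
    exact zero_ne_one hLz₂
  have hz₂z₁ : z₂ ≠ z₁ := by
    rw [hz₂def]
    intro h
    exact hw0 (by linear_combination h)
  refine ⟨a + z₂⁻¹, ?_, ?_, (C z₂ hz₂0).mpr hLz₂, ?_⟩
  · intro h
    have : z₂⁻¹ = 0 := by linear_combination h
    exact inv_ne_zero hz₂0 this
  · intro h
    rw [← hbz] at h
    have h' : z₂⁻¹ = z₁⁻¹ := by linear_combination h
    exact hz₂z₁ (by rw [← inv_inv z₂, h', inv_inv])
  · intro d hd
    by_cases hda : d = a
    · exact Or.inl hda
    have had0 : a + d ≠ 0 := by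
      intro h
      apply hda
      linear_combination h - a * h2
    set z₃ : F := (a + d)⁻¹ with hz₃def
    have hz₃0 : z₃ ≠ 0 := inv_ne_zero had0
    have hdz : a + z₃⁻¹ = d := by
      rw [hz₃def, inv_inv]
      linear_combination a * h2
    have hLz₃ : e * z₃ ^ 2 ^ k + a * z₃ = 1 := by
      apply (C z₃ hz₃0).mp
      rw [hdz]; exact hd
    by_cases hz31 : z₃ = z₁
    · right; left
      rw [← hbz, ← hdz, hz31]
    right; right
    set g : F := z₃ + z₁ with hgdef
    have hg0 : g ≠ 0 := by
      intro h
      exact hz31 (by linear_combination h - z₁ * h2)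
    have hLg : e * g ^ 2 ^ k = a * g := by
      rw [hgdef, hfrobk]
      linear_combination hLz₃ + hLz₁ + (1 - a * z₃ - a * z₁) * h2
    have hgpow : g ^ (2 ^ k - 1) = a * e⁻¹ := by
      have hsplit : g ^ 2 ^ k = g ^ (2 ^ k - 1) * g := by rw [← pow_succ, hqsub]
      rw [hsplit] at hLg
      field_simp
      have := mul_right_cancel₀ hg0 (by linear_combination hLg : e * g ^ (2 ^ k - 1) * g = a * g)
      linear_combination this
    have hgw : g = w := hinj (by show g ^ (2 ^ k - 1) = w ^ (2 ^ k - 1); rw [hgpow, hw])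
    have : z₃ = z₂ := by
      rw [hz₂def, ← hgw, hgdef]
      linear_combination (-z₁) * h2
    rw [← hdz, this]

/-- Let `gcd(k, m) = 1` with `m = r·p` for a prime `p ≠ 3`.  If `β` lies in the subfield
`F_{2^r}` of `F_{2^m}` and `P(X) = X^(2^k+1) + X + β` has no root in `F_{2^r}`, then
`P(X)` has no root in `F_{2^m}`. -/
theorem no_root_in_extension (k r p : ℕ) (hk : 0 < k) (hr : 0 < r)
    (hp : Nat.Prime p) (hp3 : p ≠ 3) (hgcd : Nat.gcd k (r * p) = 1)
    (β : GaloisField 2 (r * p)) (hβ : β ^ 2 ^ r = β)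
    (hnoroot : ∀ x : GaloisField 2 (r * p),
      x ^ 2 ^ r = x → x ^ (2 ^ k + 1) + x + β ≠ 0) :
    ∀ x : GaloisField 2 (r * p), x ^ (2 ^ k + 1) + x + β ≠ 0 := by
  classical
  intro x hx
  haveI : Fintype (GaloisField 2 (r * p)) := Fintype.ofFinite _
  have hm0 : r * p ≠ 0 := by
    have := hp.two_le; positivity
  have hm1 : 1 < r * p := by
    have h2le := hp.two_le
    have : 1 * 2 ≤ r * p := Nat.mul_le_mul hr h2le
    omega
  have hcard : Fintype.card (GaloisField 2 (r * p)) = 2 ^ (r * p) := by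
    have h := GaloisField.card 2 (r * p) hm0
    rwa [Nat.card_eq_fintype_card] at h
  have hpow : ∀ g : GaloisField 2 (r * p), g ^ 2 ^ (r * p) = g := fun g => by
    rw [← hcard]; exact FiniteField.pow_card g
  have h2 : (2 : GaloisField 2 (r * p)) = 0 := CharTwo.two_eq_zero
  have hfrob : ∀ (n : ℕ) (s t : GaloisField 2 (r * p)),
      (s + t) ^ 2 ^ n = s ^ 2 ^ n + t ^ 2 ^ n := fun n s t => add_pow_char_pow _ _ _ _
  have hidem : ∀ g : GaloisField 2 (r * p), g ^ 2 ^ k = g → g = 0 ∨ g = 1 := by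
    intro g hg
    have hsq : g ^ 2 = g := my_idem (my_bezout hm1 hgcd) hpow g hg
    have hmul : g * (g - 1) = 0 := by linear_combination hsq
    rcases mul_eq_zero.mp hmul with h | h
    · exact Or.inl h
    · exact Or.inr (by linear_combination h)
  have hone : ∀ g : GaloisField 2 (r * p), g ^ 2 ^ k = 1 → g = 1 := by
    intro g hg
    have hg0 : g ≠ 0 := by
      intro h
      rw [h, zero_pow (pow_ne_zero _ two_ne_zero)] at hg
      exact zero_ne_one hg
    have hcard1 : g ^ (Fintype.card (GaloisField 2 (r * p)) - 1) = 1 :=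
      FiniteField.pow_card_sub_one_eq_one g hg0
    have hgcd1 := pow_gcd_eq_one.mpr ⟨hg, hcard1⟩
    have hodd : Odd (Fintype.card (GaloisField 2 (r * p)) - 1) := by
      rw [hcard]
      refine Nat.Even.sub_odd ?_ ?_ odd_one
      · exact Nat.one_le_two_pow
      · exact (Nat.even_pow' hm0).mpr even_two
    have hco : Nat.Coprime (2 ^ k) (Fintype.card (GaloisField 2 (r * p)) - 1) :=
      Nat.Coprime.pow_left _ (Nat.coprime_two_left.mpr hodd)
    rwa [hco, pow_one] at hgcd1
  have hβ0 : β ≠ 0 := by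
    intro h
    exact hnoroot 0 (by rw [zero_pow (pow_ne_zero _ two_ne_zero)])
      (by rw [h, zero_pow (by positivity), zero_add, zero_add])
  have hxy : x ^ 2 ^ r ≠ x := fun h => hnoroot x h hx
  have hroot_frob : ∀ t : GaloisField 2 (r * p), t ^ (2 ^ k + 1) + t + β = 0 →
      (t ^ 2 ^ r) ^ (2 ^ k + 1) + t ^ 2 ^ r + β = 0 := by
    intro t ht
    have h1 : (t ^ 2 ^ r) ^ (2 ^ k + 1) = (t ^ (2 ^ k + 1)) ^ 2 ^ r := by
      rw [← pow_mul, ← pow_mul]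
      congr 1
      exact Nat.mul_comm _ _
    rw [h1, ← hβ, ← hfrob r, ← hfrob r, ht, zero_pow (pow_ne_zero _ two_ne_zero)]
  have hfrobinj : ∀ s t : GaloisField 2 (r * p), s ^ 2 ^ r = t ^ 2 ^ r → s = t := by
    intro s t h
    have hz : (s + t) ^ 2 ^ r = 0 := by
      rw [hfrob r, h, ← two_mul, h2, zero_mul]
    have h0 : s + t = 0 := pow_eq_zero_iff (pow_ne_zero _ two_ne_zero) |>.mp hz
    linear_combination h0 - t * h2
  have hyroot := hroot_frob x hx
  obtain ⟨c, hcx, hcy, hcroot, huniq⟩ :=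
    three_roots h2 k hk (hfrob k) hidem hone hβ0 hxy.symm hx hyroot
  have hyy : (x ^ 2 ^ r) ^ 2 ^ r ≠ x ^ 2 ^ r := fun h => hnoroot _ h hyroot
  have hcc : c ^ 2 ^ r ≠ c := fun h => hnoroot _ h hcroot
  have hσyroot := hroot_frob _ hyroot
  have hσcroot := hroot_frob _ hcroot
  rcases huniq _ hσyroot with hσy | hσy | hσy
  · -- σ y = x
    rcases huniq _ hσcroot with hσc | hσc | hσc
    · -- σ c = x = σ y ⇒ c = y
      exact hcy (hfrobinj _ _ (by rw [hσc, hσy]))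
    · -- σ c = σ x ⇒ c = x
      exact hcx (hfrobinj _ _ hσc)
    · exact hcc hσc
  · exact hyy hσy
  · -- σ y = c
    rcases huniq _ hσcroot with hσc | hσc | hσc
    · -- 3-cycle x → y → c → x
      have key : ∀ n : ℕ, (n % 3 = 0 → x ^ 2 ^ (r * n) = x) ∧
          (n % 3 = 1 → x ^ 2 ^ (r * n) = x ^ 2 ^ r) ∧ (n % 3 = 2 → x ^ 2 ^ (r * n) = c) := by
        intro n
        induction n with
        | zero => exact ⟨fun _ => by simp, fun h => by omega, fun h => by omega⟩
        | succ n ih =>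
            have hstep : x ^ 2 ^ (r * (n + 1)) = (x ^ 2 ^ (r * n)) ^ 2 ^ r := by
              rw [← pow_mul, ← pow_add, mul_add, mul_one]
            refine ⟨?_, ?_, ?_⟩
            · intro h
              have hn : n % 3 = 2 := by omega
              rw [hstep, ih.2.2 hn]
              exact hσc
            · intro h
              have hn : n % 3 = 0 := by omega
              rw [hstep, ih.1 hn]
            · intro h
              have hn : n % 3 = 1 := by omega
              rw [hstep, ih.2.1 hn]
              exact hσy
      have hfinal := hpow x
      have hmod : p % 3 = 0 ∨ p % 3 = 1 ∨ p % 3 = 2 := by omega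
      rcases hmod with h | h | h
      · have hdvd : 3 ∣ p := Nat.dvd_of_mod_eq_zero h
        rcases (Nat.Prime.eq_one_or_self_of_dvd hp 3 hdvd) with h3 | h3
        · omega
        · exact hp3 h3.symm
      · exact hxy (by rw [← (key p).2.1 h, hfinal])
      · exact hcx (by rw [← (key p).2.2 h, hfinal])
    · -- σ c = σ x ⇒ c = x
      exact hcx (hfrobinj _ _ hσc)
    · exact hcc hσc
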